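/- Let Ω be a compact Hausdorff space and let X be a complex Banach space that is a module over C(Ω, ℂ) with ‖f·x‖ ≤ ‖f‖_∞‖x‖. Assume X is regular in the sense that for every x ∈ X and every ε > 0 there exists a bounded C(Ω, ℂ)-module map T : X → C(Ω, ℂ) with operator norm ‖T‖ ≤ 1 and ‖x‖ ≤ ‖T(x)‖_∞ + ε. Then the norm of X is absolutely C(Ω, ℂ)-convex: for all n, all f₁, …, fₙ, g₁, …, gₙ ∈ C(Ω, ℂ) and all x₁, …, xₙ ∈ X, ‖ Σᵢ (fᵢ gᵢ)·xᵢ ‖ ≤ ‖ Σᵢ |fᵢ|² ‖_∞^{1/2} · ( maxᵢ ‖xᵢ‖ ) · ‖ Σᵢ |gᵢ|² ‖_∞^{1/2}. -/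

import Mathlib

open scoped BigOperators

/-- Commutative case of Proposition 1.5: if `X` is a regular Banach `C(Ω, ℂ)`-module
(i.e. every element's norm is approximately attained by contractive module maps into
`C(Ω, ℂ)`), then the norm of `X` is absolutely `C(Ω, ℂ)`-convex:
`‖Σᵢ (fᵢgᵢ)·xᵢ‖ ≤ ‖Σᵢ fᵢfᵢ*‖^{1/2} · maxᵢ ‖xᵢ‖ · ‖Σᵢ gᵢ*gᵢ‖^{1/2}`. -/
theorem stmt_12 {Ω : Type*} [TopologicalSpace Ω] [CompactSpace Ω] [T2Space Ω]
    {X : Type*} [NormedAddCommGroup X] [NormedSpace ℂ X] [CompleteSpace X]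
    [Module C(Ω, ℂ) X]
    (hmod : ∀ (f : C(Ω, ℂ)) (x : X), ‖f • x‖ ≤ ‖f‖ * ‖x‖)
    (hreg : ∀ x : X, ∀ ε > (0 : ℝ), ∃ T : X →L[ℂ] C(Ω, ℂ),
      (∀ (f : C(Ω, ℂ)) (y : X), T (f • y) = f * T y) ∧ ‖T‖ ≤ 1 ∧ ‖x‖ ≤ ‖T x‖ + ε) :
    ∀ (n : ℕ) (f g : Fin n → C(Ω, ℂ)) (x : Fin n → X),
      ‖∑ i, (f i * g i) • x i‖ ≤
        Real.sqrt ‖∑ i, f i * star (f i)‖ * (⨆ i, ‖x i‖) *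
          Real.sqrt ‖∑ i, star (g i) * g i‖ := by
  intro n f g x
  set A := Real.sqrt ‖∑ i, f i * star (f i)‖ with hA
  set B := Real.sqrt ‖∑ i, star (g i) * g i‖ with hB
  set M := ⨆ i, ‖x i‖ with hM
  have hM0 : 0 ≤ M := Real.iSup_nonneg fun i => norm_nonneg _
  have hMi : ∀ i, ‖x i‖ ≤ M :=
    fun i => le_ciSup (f := fun i => ‖x i‖) (Set.Finite.bddAbove (Set.finite_range _)) i
  have hA0 : 0 ≤ A := Real.sqrt_nonneg _
  have hB0 : 0 ≤ B := Real.sqrt_nonneg _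
  have hRHS0 : 0 ≤ A * M * B := by positivity
  refine le_of_forall_pos_le_add fun ε hε => ?_
  obtain ⟨T, hTmod, hT1, hTx⟩ := hreg (∑ i, (f i * g i) • x i) ε hε
  refine hTx.trans (add_le_add_left ?_ ε)
  have hTs : T (∑ i, (f i * g i) • x i) = ∑ i, (f i * g i) * T (x i) := by
    rw [map_sum]; exact Finset.sum_congr rfl fun i _ => hTmod _ _
  rw [hTs, ContinuousMap.norm_le _ hRHS0]
  intro ω
  have happ : (∑ i, (f i * g i) * T (x i)) ω = ∑ i, f i ω * g i ω * (T (x i)) ω := by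
    simp [mul_assoc]
  rw [happ]
  have hTxi : ∀ i, ‖(T (x i)) ω‖ ≤ M := by
    intro i
    calc ‖(T (x i)) ω‖ ≤ ‖T (x i)‖ := ContinuousMap.norm_coe_le_norm _ _
      _ ≤ ‖T‖ * ‖x i‖ := T.le_opNorm _
      _ ≤ 1 * M := mul_le_mul hT1 (hMi i) (norm_nonneg _) zero_le_one
      _ = M := one_mul M
  have h1 : ‖∑ i, f i ω * g i ω * (T (x i)) ω‖ ≤
      ∑ i, ‖f i ω‖ * (‖g i ω‖ * ‖(T (x i)) ω‖) := by
    refine (norm_sum_le _ _).trans (le_of_eq ?_)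
    refine Finset.sum_congr rfl fun i _ => ?_
    rw [norm_mul, norm_mul, mul_assoc]
  refine h1.trans ?_
  have hCS := Real.sum_mul_le_sqrt_mul_sqrt Finset.univ
    (fun i => ‖f i ω‖) (fun i => ‖g i ω‖ * ‖(T (x i)) ω‖)
  refine hCS.trans ?_
  -- first factor
  have hfval : ((∑ i, f i * star (f i)) ω) = ((∑ i, ‖f i ω‖ ^ 2 : ℝ) : ℂ) := by
    push_cast
    simp only [ContinuousMap.sum_apply, ContinuousMap.mul_apply, ContinuousMap.star_apply]
    refine Finset.sum_congr rfl fun i _ => ?_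
    rw [Complex.star_def, Complex.mul_conj, Complex.normSq_eq_norm_sq]
    push_cast; ring
  have hf : ∑ i, ‖f i ω‖ ^ 2 ≤ ‖∑ i, f i * star (f i)‖ := by
    have h := ContinuousMap.norm_coe_le_norm (∑ i, f i * star (f i)) ω
    rw [hfval] at h
    rwa [Complex.norm_real, Real.norm_of_nonneg
      (Finset.sum_nonneg fun i _ => sq_nonneg _)] at h
  have hgval : ((∑ i, star (g i) * g i) ω) = ((∑ i, ‖g i ω‖ ^ 2 : ℝ) : ℂ) := by
    push_cast
    simp only [ContinuousMap.sum_apply, ContinuousMap.mul_apply, ContinuousMap.star_apply]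
    refine Finset.sum_congr rfl fun i _ => ?_
    rw [Complex.star_def, mul_comm, Complex.mul_conj, Complex.normSq_eq_norm_sq]
    push_cast; ring
  have hg : ∑ i, ‖g i ω‖ ^ 2 ≤ ‖∑ i, star (g i) * g i‖ := by
    have h := ContinuousMap.norm_coe_le_norm (∑ i, star (g i) * g i) ω
    rw [hgval] at h
    rwa [Complex.norm_real, Real.norm_of_nonneg
      (Finset.sum_nonneg fun i _ => sq_nonneg _)] at h
  -- second factor bound: ∑ (‖g i ω‖ * ‖T(x i) ω‖)^2 ≤ M^2 * ‖∑ g* g‖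
  have hsecond : ∑ i, (‖g i ω‖ * ‖(T (x i)) ω‖) ^ 2 ≤ M ^ 2 * ‖∑ i, star (g i) * g i‖ := by
    calc ∑ i, (‖g i ω‖ * ‖(T (x i)) ω‖) ^ 2
        ≤ ∑ i, M ^ 2 * ‖g i ω‖ ^ 2 := by
          refine Finset.sum_le_sum fun i _ => ?_
          rw [mul_pow]
          calc ‖g i ω‖ ^ 2 * ‖(T (x i)) ω‖ ^ 2
              ≤ ‖g i ω‖ ^ 2 * M ^ 2 := by
                refine mul_le_mul_of_nonneg_left ?_ (sq_nonneg _)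
                exact pow_le_pow_left₀ (norm_nonneg _) (hTxi i) 2
            _ = M ^ 2 * ‖g i ω‖ ^ 2 := mul_comm _ _
      _ = M ^ 2 * ∑ i, ‖g i ω‖ ^ 2 := by rw [Finset.mul_sum]
      _ ≤ M ^ 2 * ‖∑ i, star (g i) * g i‖ :=
          mul_le_mul_of_nonneg_left hg (sq_nonneg _)
  calc Real.sqrt (∑ i, ‖f i ω‖ ^ 2) * Real.sqrt (∑ i, (‖g i ω‖ * ‖(T (x i)) ω‖) ^ 2)
      ≤ A * Real.sqrt (M ^ 2 * ‖∑ i, star (g i) * g i‖) :=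
        mul_le_mul (Real.sqrt_le_sqrt hf) (Real.sqrt_le_sqrt hsecond)
          (Real.sqrt_nonneg _) hA0
    _ = A * (M * B) := by
        rw [Real.sqrt_mul (sq_nonneg _), Real.sqrt_sq hM0]
    _ = A * M * B := by ring
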